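/- The 5-dimensional complex algebra μ⁵₁,₄ with nonzero products e₁e₁=e₂, e₁e₂=e₃, e₁e₃=e₄, e₁e₅=e₄, e₂e₁=e₃, e₂e₂=e₄, e₃e₁=e₄, e₅e₅=e₄ degenerates to μ⁵₁,₃ (same products but without e₅e₅=e₄) via the parametric basis E₁ᵗ = t e₁, E₂ᵗ = t² e₂, E₃ᵗ = t³ e₃, E₄ᵗ = t⁴ e₄, E₅ᵗ = t³ e₅. -/
import Mathlib


open Module Filter Topology

/-- Structure constants of the algebra `μ⁵₁,₄` (basis `e₁,…,e₅`, 0-indexed):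
`e₁e₁=e₂, e₁e₂=e₃, e₁e₃=e₄, e₁e₅=e₄, e₂e₁=e₃, e₂e₂=e₄, e₃e₁=e₄, e₅e₅=e₄`. -/
noncomputable def cA : Fin 5 → Fin 5 → Fin 5 → ℂ := fun i j m =>
  if i = 0 ∧ j = 0 ∧ m = 1 then 1
  else if i = 0 ∧ j = 1 ∧ m = 2 then 1
  else if i = 0 ∧ j = 2 ∧ m = 3 then 1
  else if i = 0 ∧ j = 4 ∧ m = 3 then 1
  else if i = 1 ∧ j = 0 ∧ m = 2 then 1
  else if i = 1 ∧ j = 1 ∧ m = 3 then 1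
  else if i = 2 ∧ j = 0 ∧ m = 3 then 1
  else if i = 4 ∧ j = 4 ∧ m = 3 then 1
  else 0

/-- Structure constants of the algebra `μ⁵₁,₃`: the same products, without `e₅e₅ = e₄`. -/
noncomputable def cB : Fin 5 → Fin 5 → Fin 5 → ℂ := fun i j m =>
  if i = 0 ∧ j = 0 ∧ m = 1 then 1
  else if i = 0 ∧ j = 1 ∧ m = 2 then 1
  else if i = 0 ∧ j = 2 ∧ m = 3 then 1
  else if i = 0 ∧ j = 4 ∧ m = 3 then 1
  else if i = 1 ∧ j = 0 ∧ m = 2 then 1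
  else if i = 1 ∧ j = 1 ∧ m = 3 then 1
  else if i = 2 ∧ j = 0 ∧ m = 3 then 1
  else 0

/-- The multiplication of `μ⁵₁,₄` on `ℂ⁵`. -/
noncomputable def mulA (x y : Fin 5 → ℂ) : Fin 5 → ℂ :=
  fun m => ∑ i, ∑ j, x i * y j * cA i j m

/-- The parametric basis `E₁ᵗ = t e₁, E₂ᵗ = t² e₂, E₃ᵗ = t³ e₃, E₄ᵗ = t⁴ e₄, E₅ᵗ = t³ e₅`. -/
noncomputable def E (t : ℂ) : Fin 5 → (Fin 5 → ℂ) :=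
  fun i => (![t, t ^ 2, t ^ 3, t ^ 4, t ^ 3] i) • (Pi.single i 1 : Fin 5 → ℂ)

set_option maxHeartbeats 1000000 in
/-- `μ⁵₁,₄` degenerates to `μ⁵₁,₃` via the parametric basis
`(t e₁, t² e₂, t³ e₃, t⁴ e₄, t³ e₅)`: for every `t ≠ 0` the family `Eᵗ` is a basis, and
the structure constants of `μ⁵₁,₄` in this basis converge, as `t → 0`, to those of
`μ⁵₁,₃`. -/
theorem mu514_degenerates_to_mu513 :
    ∃ c : ℂ → Fin 5 → Fin 5 → Fin 5 → ℂ,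
      (∀ t : ℂ, t ≠ 0 → LinearIndependent ℂ (E t) ∧
        ∀ i j : Fin 5, mulA (E t i) (E t j) = ∑ m, c t i j m • E t m) ∧
      (∀ i j m : Fin 5,
        Tendsto (fun t => c t i j m) (𝓝[≠] (0 : ℂ)) (𝓝 (cB i j m))) := by
  refine ⟨fun t i j m => if i = 4 ∧ j = 4 ∧ m = 3 then t ^ 2 else cA i j m, ?_, ?_⟩
  · intro t ht
    constructor
    · rw [Fintype.linearIndependent_iff]
      intro g hg i
      have h := congrFun hg i
      fin_cases i <;>
        simpa [E, Fin.sum_univ_five, Pi.single_apply, pow_eq_zero_iff, ht] using h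
    · intro i j
      funext m
      fin_cases i <;> fin_cases j <;> fin_cases m <;>
        simp [mulA, E, cA, Fin.sum_univ_five, Pi.single_apply] <;> ring
  · intro i j m
    by_cases h : i = 4 ∧ j = 4 ∧ m = 3
    · simp only [h, if_true]
      obtain ⟨hi, hj, hm⟩ := h
      subst hi; subst hj; subst hm
      have hb : cB 4 4 3 = 0 := by simp [cB]
      rw [hb]
      have hc : Tendsto (fun t : ℂ => t ^ 2) (𝓝 (0 : ℂ)) (𝓝 ((0:ℂ) ^ 2)) :=
        (continuous_pow 2).tendsto 0
      simpa using hc.mono_left nhdsWithin_le_nhds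
    · simp only [h, if_false]
      have hAB : cA i j m = cB i j m := by
        simp only [cA, cB]
        split_ifs with h1 h2 h3 h4 h5 h6 h7 <;> simp_all
      rw [hAB]
      exact tendsto_const_nhds
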